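/- Let α, β > 0, let w_1, w_2 ∈ [0, 1] with w_1 + w_2 = 1, and define the density u(θ) := w_1 · β · e^{−β·θ} + w_2 · (β^α / Γ(α)) · θ^{α−1} · e^{−β·θ} for θ > 0 and p_n := ∫_0^∞ e^{−θ} · (θ^n / n!) · u(θ) dθ for n ∈ ℕ. Then p_0 = w_1 · β/(β+1) + w_2 · (β/(β+1))^α, and for every integer n ≥ 1, p_n = [1/(n·(β+1))] · [w_1 · n! · (β+1)^{α−1} + w_2 · (α)_n · β^{α−1}] / [w_1 · (n−1)! · (β+1)^{α−1} + w_2 · (α)_{n−1} · β^{α−1}] · p_{n−1}, where (α)_k := α·(α+1)···(α+k−1) denotes the ascending factorial with (α)_0 := 1. -/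

import Mathlib

open MeasureTheory
open scoped Nat

/-- The ascending factorial `(α)_k = α (α+1) ⋯ (α+k−1)` of a real number, with `(α)_0 = 1`. -/
noncomputable def ascFac (α : ℝ) : ℕ → ℝ
  | 0 => 1
  | k + 1 => ascFac α k * (α + k)

lemma ascFac_pos {α : ℝ} (hα : 0 < α) (n : ℕ) : 0 < ascFac α n := by
  induction n with
  | zero => simp [ascFac]
  | succ k ih => exact mul_pos ih (by positivity)

lemma Gamma_add_nat {α : ℝ} (hα : 0 < α) (n : ℕ) :
    Real.Gamma ((n : ℝ) + α) = ascFac α n * Real.Gamma α := by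
  induction n with
  | zero => simp [ascFac]
  | succ k ih =>
    have h : ((k : ℝ) + 1 + α) = ((k : ℝ) + α) + 1 := by ring
    rw [Nat.cast_succ, h, Real.Gamma_add_one (by positivity), ih, ascFac]
    ring

lemma integrableOn_aux {s b : ℝ} (hs : -1 < s) (hb : 0 < b) :
    IntegrableOn (fun x : ℝ => x ^ s * Real.exp (-(b * x))) (Set.Ioi 0) := by
  have h := integrableOn_rpow_mul_exp_neg_mul_rpow hs (zero_lt_one (α := ℝ)) hb
  refine h.congr_fun (fun x hx => ?_) measurableSet_Ioi
  simp only [Real.rpow_one, neg_mul]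

theorem mixed_poisson_exp_gamma_mixture_recursion
    (α β w₁ w₂ : ℝ) (hα : 0 < α) (hβ : 0 < β)
    (hw₁ : 0 ≤ w₁) (hw₂ : 0 ≤ w₂) (hw : w₁ + w₂ = 1)
    (u : ℝ → ℝ)
    (hu : ∀ θ : ℝ, 0 < θ →
      u θ = w₁ * β * Real.exp (-β * θ)
        + w₂ * (β ^ α / Real.Gamma α) * θ ^ (α - 1) * Real.exp (-β * θ))
    (p : ℕ → ℝ)
    (hp : ∀ n : ℕ, p n = ∫ θ in Set.Ioi (0 : ℝ),
      Real.exp (-θ) * (θ ^ n / (n ! : ℝ)) * u θ) :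
    p 0 = w₁ * (β / (β + 1)) + w₂ * (β / (β + 1)) ^ α
    ∧ ∀ n : ℕ, 1 ≤ n →
        p n = (1 / ((n : ℝ) * (β + 1)))
          * ((w₁ * (n ! : ℝ) * (β + 1) ^ (α - 1) + w₂ * ascFac α n * β ^ (α - 1))
            / (w₁ * ((n - 1)! : ℝ) * (β + 1) ^ (α - 1)
                + w₂ * ascFac α (n - 1) * β ^ (α - 1)))
          * p (n - 1) := by
  have hb1 : (0 : ℝ) < β + 1 := by linarith
  have hΓα : 0 < Real.Gamma α := Real.Gamma_pos_of_pos hα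
  have e6 : β ^ α = β * β ^ (α - 1) := by
    have h := Real.rpow_add hβ 1 (α - 1)
    rw [Real.rpow_one, show (1:ℝ) + (α - 1) = α by ring] at h
    exact h
  have e7 : (β + 1) ^ α = (β + 1) * (β + 1) ^ (α - 1) := by
    have h := Real.rpow_add hb1 1 (α - 1)
    rw [Real.rpow_one, show (1:ℝ) + (α - 1) = α by ring] at h
    exact h
  have hNpos : ∀ k : ℕ,
      0 < w₁ * (k ! : ℝ) * (β + 1) ^ (α - 1) + w₂ * ascFac α k * β ^ (α - 1) := by
    intro k
    rcases eq_or_lt_of_le hw₁ with h1 | h1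
    · have h2 : w₂ = 1 := by linarith
      have hp2 : 0 < w₂ * ascFac α k * β ^ (α - 1) := by
        have := ascFac_pos hα k
        rw [h2]; positivity
      have hge : 0 ≤ w₁ * (k ! : ℝ) * (β + 1) ^ (α - 1) := by positivity
      linarith
    · have hp1 : 0 < w₁ * (k ! : ℝ) * (β + 1) ^ (α - 1) := by
        have : (0:ℝ) < (k ! : ℝ) := by positivity
        positivity
      have hge : 0 ≤ w₂ * ascFac α k * β ^ (α - 1) := by
        have := (ascFac_pos hα k).le
        positivity
      linarith
  have pval : ∀ n : ℕ, p n = β / ((β + 1) ^ ((n : ℝ) + α) * (n ! : ℝ))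
      * (w₁ * (n ! : ℝ) * (β + 1) ^ (α - 1) + w₂ * ascFac α n * β ^ (α - 1)) := by
    intro n
    have hfac : (0:ℝ) < (n ! : ℝ) := by positivity
    have key : p n = (w₁ * β / (n ! : ℝ)) *
          (∫ θ in Set.Ioi (0:ℝ), θ ^ (((n : ℝ) + 1) - 1) * Real.exp (-((β + 1) * θ)))
        + (w₂ * β ^ α / (Real.Gamma α * (n ! : ℝ))) *
          (∫ θ in Set.Ioi (0:ℝ), θ ^ (((n : ℝ) + α) - 1) * Real.exp (-((β + 1) * θ))) := by
      have h1 : ∫ θ in Set.Ioi (0:ℝ),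
          ((w₁ * β / (n ! : ℝ)) * (θ ^ (((n : ℝ) + 1) - 1) * Real.exp (-((β + 1) * θ)))
            + (w₂ * β ^ α / (Real.Gamma α * (n ! : ℝ))) *
              (θ ^ (((n : ℝ) + α) - 1) * Real.exp (-((β + 1) * θ))))
          = (w₁ * β / (n ! : ℝ)) *
          (∫ θ in Set.Ioi (0:ℝ), θ ^ (((n : ℝ) + 1) - 1) * Real.exp (-((β + 1) * θ)))
        + (w₂ * β ^ α / (Real.Gamma α * (n ! : ℝ))) *
          (∫ θ in Set.Ioi (0:ℝ), θ ^ (((n : ℝ) + α) - 1) * Real.exp (-((β + 1) * θ))) := by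
        rw [integral_add
          ((integrableOn_aux (s := ((n : ℝ) + 1) - 1) (by linarith [Nat.cast_nonneg (α := ℝ) n]) hb1).const_mul _)
          ((integrableOn_aux (s := ((n : ℝ) + α) - 1) (by nlinarith [Nat.cast_nonneg (α := ℝ) n]) hb1).const_mul _),
          integral_const_mul, integral_const_mul]
      rw [hp n, ← h1]
      refine setIntegral_congr_fun measurableSet_Ioi (fun θ hθ => ?_)
      have hθ' : (0:ℝ) < θ := hθ
      rw [hu θ hθ']
      have e1 : θ ^ (((n : ℝ) + 1) - 1) = θ ^ n := by
        rw [show ((n : ℝ) + 1) - 1 = (n : ℝ) by ring, Real.rpow_natCast]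
      have e2 : θ ^ (((n : ℝ) + α) - 1) = θ ^ n * θ ^ (α - 1) := by
        rw [show ((n : ℝ) + α) - 1 = (n : ℝ) + (α - 1) by ring, Real.rpow_add hθ',
          Real.rpow_natCast]
      have e3 : Real.exp (-θ) * Real.exp (-β * θ) = Real.exp (-((β + 1) * θ)) := by
        rw [← Real.exp_add]; ring_nf
      rw [e1, e2, ← e3]
      field_simp
    rw [key, Real.integral_rpow_mul_exp_neg_mul_Ioi (a := (n : ℝ) + 1) (by positivity) hb1,
      Real.integral_rpow_mul_exp_neg_mul_Ioi (a := (n : ℝ) + α) (by positivity) hb1,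
      Gamma_add_nat hα n, show ((n : ℝ) + 1) = ((n : ℕ) : ℝ) + 1 by norm_num,
      Real.Gamma_nat_eq_factorial]
    have hA : (β + 1) ^ ((n:ℝ) + α) = (β + 1) ^ ((n:ℝ) + 1) * (β + 1) ^ (α - 1) := by
      rw [← Real.rpow_add hb1]; ring_nf
    have hX := Real.rpow_pos_of_pos hb1 ((n:ℝ) + 1)
    have hY := Real.rpow_pos_of_pos hb1 (α - 1)
    rw [one_div, Real.inv_rpow hb1.le, Real.inv_rpow hb1.le, hA, e6]
    field_simp
  constructor
  · rw [pval 0]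
    have e8 : (β / (β + 1)) ^ α = β ^ α / (β + 1) ^ α := Real.div_rpow hβ.le hb1.le α
    have hBα : (0:ℝ) < (β + 1) ^ α := Real.rpow_pos_of_pos hb1 _
    rw [e8, e6, e7]
    norm_num [ascFac]
    have h1 := (Real.rpow_pos_of_pos hb1 (α-1)).ne'
    have h2 := hBα.ne'
    rw [e7]
    field_simp
  · rintro n hn
    obtain ⟨m, rfl⟩ : ∃ m, n = m + 1 := ⟨n - 1, (Nat.succ_pred_eq_of_pos hn).symm⟩
    simp only [Nat.add_sub_cancel]
    rw [pval (m+1), pval m]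
    have hBm : (0:ℝ) < (β + 1) ^ ((m : ℝ) + α) := Real.rpow_pos_of_pos hb1 _
    have hstep : (β + 1) ^ (((m+1 : ℕ) : ℝ) + α) = (β + 1) ^ ((m : ℝ) + α) * (β + 1) := by
      rw [show (((m+1 : ℕ) : ℝ) + α) = ((m : ℝ) + α) + 1 by push_cast; ring,
        Real.rpow_add_one hb1.ne']
    have hfacm : (0:ℝ) < (m ! : ℝ) := by positivity
    have hfacstep : (((m+1)! : ℕ) : ℝ) = ((m:ℝ) + 1) * (m ! : ℝ) := by
      rw [Nat.factorial_succ]; push_cast; ring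
    have hNm := (hNpos m).ne'
    have hn1 : (0:ℝ) < ((m+1 : ℕ) : ℝ) := by positivity
    rw [hstep, hfacstep]
    push_cast
    field_simp
    exact (mul_div_cancel_right₀ _ (by convert hNm using 1; ring)).symm
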